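/- Let N be a finite stable subset of the open box (0, z^r) in general position, and for each u ∈ U(N) and each j let z^j(u) denote the (unique) j-th defining point of u. Then U(N) is a finite set, and the p-dimensional Lebesgue measure of the dominated region D(N) equals the sum over u ∈ U(N) of (z^r_1 − z^1_1(u)) · ∏_{j=2}^p (u_j − max_{k<j} z^k_j(u)). -/

import Mathlib

open scoped BigOperators

/-- `z` weakly dominates `z'` (z ≦ z'). -/
def WDom {n : ℕ} (z z' : Fin n → ℝ) : Prop := ∀ j, z j ≤ z' j

/-- `z` dominates `z'` (z ≤ z'). -/
def Dom {n : ℕ} (z z' : Fin n → ℝ) : Prop := WDom z z' ∧ z ≠ z'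

/-- `z` strictly dominates `z'` (z < z'). -/
def SDom {n : ℕ} (z z' : Fin n → ℝ) : Prop := ∀ j, z j < z' j

/-- The dominated region `D(N)` with respect to the reference point `zr`. -/
def DomRegion {n : ℕ} (zr : Fin n → ℝ) (N : Set (Fin n → ℝ)) : Set (Fin n → ℝ) :=
  {x | ∃ z ∈ N, WDom z x ∧ WDom x zr}

/-- Property (P1): no point of `N` strictly dominates `u`. -/
def P1 {n : ℕ} (N : Set (Fin n → ℝ)) (u : Fin n → ℝ) : Prop := ¬ ∃ z ∈ N, SDom z u

/-- The upper bound set `U(N)`: points of `[0, zr]` satisfying (P1) and maximal for it. -/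
def UBSet {n : ℕ} (zr : Fin n → ℝ) (N : Set (Fin n → ℝ)) : Set (Fin n → ℝ) :=
  {u | WDom 0 u ∧ WDom u zr ∧ P1 N u ∧
       ∀ u', WDom 0 u' → WDom u' zr → Dom u u' → ¬ P1 N u'}

/-- The dummy point `ẑ^j`. -/
def zhat {n : ℕ} (zr : Fin n → ℝ) (j : Fin n) : Fin n → ℝ :=
  fun k => if k = j then zr j else 0

/-- `N̂ = N ∪ {ẑ^1, …, ẑ^p}`. -/
def Nhat {n : ℕ} (zr : Fin n → ℝ) (N : Set (Fin n → ℝ)) : Set (Fin n → ℝ) :=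
  N ∪ Set.range (zhat zr)

/-- A stable set: no point dominates another point of the set. -/
def Stable {n : ℕ} (N : Set (Fin n → ℝ)) : Prop :=
  ∀ z ∈ N, ∀ z' ∈ N, ¬ Dom z z'

/-- General position: no two distinct points share a coordinate value. -/
def GenPos {n : ℕ} (N : Set (Fin n → ℝ)) : Prop :=
  ∀ z ∈ N, ∀ z' ∈ N, z ≠ z' → ∀ j, z j ≠ z' j

/-- Membership in the open box `(0, zr)`. -/
def InOpenBox {n : ℕ} (zr : Fin n → ℝ) (z : Fin n → ℝ) : Prop :=
  ∀ j, 0 < z j ∧ z j < zr j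

/-! ### Auxiliary machinery -/

section Aux

variable {n : ℕ}

/-- Strict lexicographic order. -/
def LexLt (a b : Fin n → ℝ) : Prop := ∃ i, (∀ m, m < i → a m = b m) ∧ a i < b i

theorem lexLt_trans {a b c : Fin n → ℝ} (h1 : LexLt a b) (h2 : LexLt b c) : LexLt a c := by
  obtain ⟨i, hi, li⟩ := h1
  obtain ⟨i', hi', li'⟩ := h2
  rcases lt_trichotomy i i' with h | h | h
  · exact ⟨i, fun m hm => (hi m hm).trans (hi' m (hm.trans h)), li.trans_eq (hi' i h)⟩
  · subst h
    exact ⟨i, fun m hm => (hi m hm).trans (hi' m hm), li.trans li'⟩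
  · exact ⟨i', fun m hm => (hi m (hm.trans h)).trans (hi' m hm), (hi i' h).symm ▸ li'⟩

theorem lexLt_irrefl (a : Fin n → ℝ) : ¬ LexLt a a := by
  rintro ⟨i, -, li⟩; exact lt_irrefl _ li

theorem exists_rel_maximal {α : Type*} {r : α → α → Prop}
    (htr : ∀ {a b c}, r a b → r b c → r a c) (hirr : ∀ a, ¬ r a a)
    (s : Finset α) (hs : s.Nonempty) : ∃ a ∈ s, ∀ b ∈ s, ¬ r a b := by
  classical
  induction s using Finset.induction_on with
  | empty => exact absurd hs (by simp)
  | @insert a s ha IH =>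
    rcases s.eq_empty_or_nonempty with rfl | hs'
    · exact ⟨a, by simp, by simpa using hirr a⟩
    · obtain ⟨m, hm, hmax⟩ := IH hs'
      by_cases hma : r m a
      · refine ⟨a, Finset.mem_insert_self _ _, fun b hb hab => ?_⟩
        rcases Finset.mem_insert.1 hb with rfl | hb
        · exact hirr _ hab
        · exact hmax b hb (htr hma hab)
      · refine ⟨m, Finset.mem_insert_of_mem hm, fun b hb hmb => ?_⟩
        rcases Finset.mem_insert.1 hb with rfl | hb
        · exact hma hmb
        · exact hmax b hb hmb

/-- If `b` dominates `a` everywhere except possibly at `j`, and is strictly bigger at some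
`k < j`, then `a` is lexicographically below `b`. -/
theorem lexLt_of_forall_le {a b : Fin n → ℝ} {j k : Fin n} (hkj : k < j)
    (h1 : ∀ m, m ≠ j → a m ≤ b m) (h2 : a k < b k) : LexLt a b := by
  classical
  have hne : (Finset.univ.filter fun m => a m ≠ b m).Nonempty :=
    ⟨k, by simp [h2.ne]⟩
  set i := (Finset.univ.filter fun m => a m ≠ b m).min' hne with hidef
  have hi_mem : a i ≠ b i := by
    have := (Finset.univ.filter fun m => a m ≠ b m).min'_mem hne
    simpa using this
  have hik : i ≤ k := Finset.min'_le _ _ (by simp [h2.ne])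
  have hij : i ≠ j := fun h => absurd (h ▸ hik) (not_le.2 hkj)
  refine ⟨i, fun m hm => ?_, lt_of_le_of_ne (h1 i hij) hi_mem⟩
  by_contra hne'
  exact absurd (Finset.min'_le _ m (by simp [hne'])) (not_le.2 hm)

end Aux
section Aux2

variable {n : ℕ} {zr : Fin n → ℝ} {N : Set (Fin n → ℝ)}

/-- The set of points of `[0,zr]` satisfying (P1). -/
def P1Box (zr : Fin n → ℝ) (N : Set (Fin n → ℝ)) : Set (Fin n → ℝ) :=
  {a | WDom 0 a ∧ WDom a zr ∧ P1 N a}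

theorem isClosed_P1Box (hN : N.Finite) : IsClosed (P1Box zr N) := by
  have h1 : P1Box zr N = (Set.Icc (0 : Fin n → ℝ) zr) ∩ ⋂ z ∈ N, {a | ¬ SDom z a} := by
    ext a
    simp only [P1Box, Set.mem_setOf_eq, Set.mem_inter_iff, Set.mem_Icc, Set.mem_iInter, P1]
    constructor
    · rintro ⟨h0, hzr, hp⟩
      exact ⟨⟨fun j => h0 j, fun j => hzr j⟩, fun z hz hs => hp ⟨z, hz, hs⟩⟩
    · rintro ⟨⟨h0, hzr⟩, hp⟩
      exact ⟨fun j => h0 j, fun j => hzr j, fun ⟨z, hz, hs⟩ => hp z hz hs⟩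
  rw [h1]
  refine isClosed_Icc.inter (isClosed_biInter fun z _ => ?_)
  have : {a : Fin n → ℝ | ¬ SDom z a} = (Set.pi Set.univ fun j => Set.Ioi (z j))ᶜ := by
    ext a; simp [SDom, Set.mem_pi]
  rw [this]
  exact (isOpen_set_pi Set.finite_univ fun j _ => isOpen_Ioi).isClosed_compl

/-- Every (P1)-point is weakly dominated by a point of the upper bound set. -/
theorem exists_ub_ge (hN : N.Finite) {a : Fin n → ℝ} (ha : a ∈ P1Box zr N) :
    ∃ u ∈ UBSet zr N, WDom a u := by
  classical
  set S : Set (Fin n → ℝ) := P1Box zr N ∩ Set.Ici a with hSdef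
  have hSne : S.Nonempty := ⟨a, ha, le_refl a⟩
  have hSc : IsClosed S := (isClosed_P1Box hN).inter isClosed_Ici
  have hScomp : IsCompact S := by
    refine (isCompact_Icc (a := (0 : Fin n → ℝ)) (b := zr)).of_isClosed_subset hSc ?_
    rintro x ⟨⟨h0, hzr, -⟩, -⟩
    exact ⟨fun j => h0 j, fun j => hzr j⟩
  obtain ⟨u, huS, hmax⟩ := hScomp.exists_isMaxOn hSne
    ((continuous_finset_sum Finset.univ fun j _ => continuous_apply j).continuousOn
      (s := S) (f := fun (x : Fin n → ℝ) => ∑ j, x j))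
  obtain ⟨⟨h0u, huzr, hP1u⟩, hau⟩ := huS
  refine ⟨u, ⟨h0u, huzr, hP1u, fun u' h0' hzr' hdom hP1' => ?_⟩, fun j => hau j⟩
  have hu'S : u' ∈ S := ⟨⟨h0', hzr', hP1'⟩, Set.mem_Ici.2 (le_trans (Set.mem_Ici.1 hau) (fun j => hdom.1 j : u ≤ u'))⟩
  have hle : ∑ j, u' j ≤ ∑ j, u j := hmax hu'S
  have hlt : ∑ j, u j < ∑ j, u' j := by
    obtain ⟨j0, hj0⟩ : ∃ j, u j ≠ u' j := by
      by_contra h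
      push_neg at h
      exact hdom.2 (funext h)
    exact Finset.sum_lt_sum (fun j _ => hdom.1 j) ⟨j0, Finset.mem_univ _, lt_of_le_of_ne (hdom.1 j0) hj0⟩
  exact absurd hlt (not_lt.2 hle)

end Aux2
section Core

variable {p : ℕ} {zr : Fin (p+2) → ℝ} {N : Set (Fin (p+2) → ℝ)}
  {zdef : (Fin (p+2) → ℝ) → Fin (p+2) → (Fin (p+2) → ℝ)}

theorem zdef_mem_N_of_lt
    (hdef : ∀ u ∈ UBSet zr N, ∀ j, zdef u j ∈ Nhat zr N ∧ zdef u j j = u j ∧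
      ∀ k, k ≠ j → zdef u j k < u k)
    {u : Fin (p+2) → ℝ} (hu : u ∈ UBSet zr N) {j : Fin (p+2)} (hlt : u j < zr j) :
    zdef u j ∈ N := by
  obtain ⟨hmem, heq, hlts⟩ := hdef u hu j
  rcases hmem with h | ⟨m, hm⟩
  · exact h
  · exfalso
    by_cases hmj : m = j
    · subst hmj
      have : zdef u m m = zr m := by rw [← hm]; simp [zhat]
      rw [heq] at this
      exact absurd this hlt.ne
    · have h1 : zdef u j m = zr m := by rw [← hm]; simp [zhat]
      have h2 : zdef u j m < u m := hlts m hmj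
      exact absurd (h1 ▸ h2) (not_lt.2 (hu.2.1 m))

theorem zdef_mem_N_of_pos
    (hdef : ∀ u ∈ UBSet zr N, ∀ j, zdef u j ∈ Nhat zr N ∧ zdef u j j = u j ∧
      ∀ k, k ≠ j → zdef u j k < u k)
    {u : Fin (p+2) → ℝ} (hu : u ∈ UBSet zr N) {j k : Fin (p+2)} (hjk : j ≠ k)
    (hpos : 0 < zdef u k j) : zdef u k ∈ N := by
  obtain ⟨hmem, heq, hlts⟩ := hdef u hu k
  rcases hmem with h | ⟨m, hm⟩
  · exact h
  · exfalso
    by_cases hmk : m = k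
    · subst hmk
      have : zdef u m j = 0 := by rw [← hm]; simp [zhat, hjk]
      rw [this] at hpos
      exact lt_irrefl _ hpos
    · have h1 : zdef u k m = zr m := by rw [← hm]; simp [zhat]
      have h2 : zdef u k m < u m := hlts m hmk
      exact absurd (h1 ▸ h2) (not_lt.2 (hu.2.1 m))

/-- The box-membership conditions (in strict form) for a generic point `x` w.r.t. `u`. -/
def PhiCond (zdef : (Fin (p+2) → ℝ) → Fin (p+2) → (Fin (p+2) → ℝ))
    (x u : Fin (p+2) → ℝ) : Prop :=
  u 0 < x 0 ∧ (∀ j, j ≠ 0 → x j < u j) ∧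
    ∀ j, j ≠ 0 → ∀ k, k < j → zdef u k j < x j

theorem phi_aux (hgp : GenPos N)
    (hdef : ∀ u ∈ UBSet zr N, ∀ j, zdef u j ∈ Nhat zr N ∧ zdef u j j = u j ∧
      ∀ k, k ≠ j → zdef u j k < u k)
    {x u u' : Fin (p+2) → ℝ} (hu : u ∈ UBSet zr N) (hu' : u' ∈ UBSet zr N)
    (h : PhiCond zdef x u) (h' : PhiCond zdef x u')
    {i : Fin (p+2)} (hlt : ∀ m, m < i → u m = u' m) : ¬ u i < u' i := by
  intro hib
  have hziN : zdef u i ∈ N :=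
    zdef_mem_N_of_lt hdef hu (lt_of_lt_of_le hib (hu'.2.1 i))
  have hsd : SDom (zdef u i) u' := by
    intro m
    rcases lt_trichotomy m i with hmi | hmi | hmi
    · have := (hdef u hu i).2.2 m (ne_of_lt hmi)
      rw [hlt m hmi] at this
      exact this
    · subst hmi
      rw [(hdef u hu m).2.1]
      exact hib
    · have hm0 : m ≠ 0 := by
        intro h0
        subst h0
        exact absurd hmi (not_lt.2 (Fin.zero_le i))
      exact lt_trans (h.2.2 m hm0 i hmi) (h'.2.1 m hm0)
  exact hu'.2.2.1 ⟨zdef u i, hziN, hsd⟩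

theorem phi_unique (hgp : GenPos N)
    (hdef : ∀ u ∈ UBSet zr N, ∀ j, zdef u j ∈ Nhat zr N ∧ zdef u j j = u j ∧
      ∀ k, k ≠ j → zdef u j k < u k)
    {x u u' : Fin (p+2) → ℝ} (hu : u ∈ UBSet zr N) (hu' : u' ∈ UBSet zr N)
    (h : PhiCond zdef x u) (h' : PhiCond zdef x u') : u = u' := by
  classical
  by_contra hne
  have hsne : (Finset.univ.filter fun m => u m ≠ u' m).Nonempty := by
    obtain ⟨m, hm⟩ : ∃ m, u m ≠ u' m := by
      by_contra hc; push_neg at hc; exact hne (funext hc)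
    exact ⟨m, by simp [hm]⟩
  set i := (Finset.univ.filter fun m => u m ≠ u' m).min' hsne with hidef
  have hmem : u i ≠ u' i := by
    have := (Finset.univ.filter fun m => u m ≠ u' m).min'_mem hsne
    simpa using this
  have hprev : ∀ m, m < i → u m = u' m := by
    intro m hm
    by_contra hc
    exact absurd (Finset.min'_le _ m (by simp [hc])) (not_le.2 hm)
  rcases lt_or_gt_of_ne hmem with hc | hc
  · exact phi_aux hgp hdef hu hu' h h' hprev hc
  · exact phi_aux hgp hdef hu' hu h' h (fun m hm => (hprev m hm).symm) hc

end Core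
section Core2

variable {p : ℕ} {zr : Fin (p+2) → ℝ} {N : Set (Fin (p+2) → ℝ)}
  {zdef : (Fin (p+2) → ℝ) → Fin (p+2) → (Fin (p+2) → ℝ)}

theorem ubset_finite (hN : N.Finite)
    (hdef : ∀ u ∈ UBSet zr N, ∀ j, zdef u j ∈ Nhat zr N ∧ zdef u j j = u j ∧
      ∀ k, k ≠ j → zdef u j k < u k) : (UBSet zr N).Finite := by
  have hNhat : (Nhat zr N).Finite := hN.union (Set.finite_range _)
  have hpi : (Set.pi (Set.univ : Set (Fin (p+2))) fun _ => Nhat zr N).Finite :=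
    Set.Finite.pi fun _ => hNhat
  apply Set.Finite.of_finite_image (f := fun u => fun j => zdef u j)
  · refine hpi.subset ?_
    rintro g ⟨u, hu, rfl⟩
    intro j _
    exact (hdef u hu j).1
  · intro u hu u' hu' heq
    funext j
    have h1 : zdef u j j = u j := (hdef u hu j).2.1
    have h2 : zdef u' j j = u' j := (hdef u' hu' j).2.1
    rw [← h1, ← h2, show zdef u j = zdef u' j from congrFun heq j]

theorem phi_exists (hzr : ∀ j, 0 < zr j) (hN : N.Finite)
    (hbox : ∀ z ∈ N, InOpenBox zr z) (hgp : GenPos N)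
    (hdef : ∀ u ∈ UBSet zr N, ∀ j, zdef u j ∈ Nhat zr N ∧ zdef u j j = u j ∧
      ∀ k, k ≠ j → zdef u j k < u k)
    {x : Fin (p+2) → ℝ} (hx : x ∈ DomRegion zr N)
    (hgen1 : ∀ z ∈ Nhat zr N, ∀ j, x j ≠ z j)
    (hgen2 : ∀ u ∈ UBSet zr N, ∀ j, x j ≠ u j) :
    ∃ u ∈ UBSet zr N, PhiCond zdef x u := by
  classical
  obtain ⟨zb, hzbN, hzbx, hxzr⟩ := hx
  have hzbsd : SDom zb x := fun j => lt_of_le_of_ne (hzbx j) (Ne.symm (hgen1 zb (Or.inl hzbN) j))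
  have hxpos : ∀ j, 0 < x j := fun j => lt_trans (hbox zb hzbN j).1 (hzbsd j)
  have hxzr' : ∀ j, x j < zr j := by
    intro j
    refine lt_of_le_of_ne (hxzr j) ?_
    have : x j ≠ zhat zr j j := hgen1 (zhat zr j) (Or.inr ⟨j, rfl⟩) j
    simpa [zhat] using this
  set Tf := (ubset_finite hN hdef).toFinset.filter (fun u => ∀ j, j ≠ 0 → x j < u j) with hTf
  have hmemTf : ∀ u, u ∈ Tf ↔ u ∈ UBSet zr N ∧ ∀ j, j ≠ 0 → x j < u j := by
    intro u
    simp [hTf, Finset.mem_filter, Set.Finite.mem_toFinset]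
  have hTne : Tf.Nonempty := by
    set y : Fin (p+2) → ℝ := fun j => if j = 0 then 0 else x j with hy
    have hyP : y ∈ P1Box zr N := by
      refine ⟨?_, ?_, ?_⟩
      · intro j
        by_cases hj : j = 0 <;> simp [hy, hj, (hxpos j).le]
      · intro j
        by_cases hj : j = 0 <;> simp [hy, hj, (hzr 0).le, (hxzr' j).le]
      · rintro ⟨z, hzN, hsd⟩
        have h1 := hsd 0
        have h2 : y 0 = 0 := by simp [hy]
        rw [h2] at h1
        exact absurd h1 (not_lt.2 (hbox z hzN 0).1.le)
    obtain ⟨u0, hu0, hyu0⟩ := exists_ub_ge hN hyP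
    refine ⟨u0, (hmemTf u0).2 ⟨hu0, fun j hj => ?_⟩⟩
    have h1 : y j ≤ u0 j := hyu0 j
    have h2 : y j = x j := by simp [hy, hj]
    exact lt_of_le_of_ne (h2 ▸ h1) (hgen2 u0 hu0 j)
  obtain ⟨u, huT, humax⟩ := exists_rel_maximal (r := LexLt) (fun h1 h2 => lexLt_trans h1 h2) lexLt_irrefl Tf hTne
  obtain ⟨huU, huT'⟩ := (hmemTf u).1 huT
  have hc1 : u 0 < x 0 := by
    rcases lt_or_gt_of_ne (hgen2 u huU 0) with hc | hc
    · exfalso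
      refine huU.2.2.1 ⟨zb, hzbN, fun j => ?_⟩
      by_cases hj : j = 0
      · subst hj; exact lt_trans (hzbsd 0) hc
      · exact lt_trans (hzbsd j) (huT' j hj)
    · exact hc
  refine ⟨u, huU, hc1, huT', ?_⟩
  intro j hj0 k hkj
  by_contra hcon
  push_neg at hcon
  have hgt : x j < zdef u k j := lt_of_le_of_ne hcon (hgen1 (zdef u k) (hdef u huU k).1 j)
  have hjk : j ≠ k := ne_of_gt hkj
  have hzkN : zdef u k ∈ N := zdef_mem_N_of_pos hdef huU hjk (lt_trans (hxpos j) hgt)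
  have hukeq : u k = zdef u k k := ((hdef u huU k).2.1).symm
  have huk_lt : u k < zr k := by rw [hukeq]; exact (hbox _ hzkN k).2
  set g := hN.toFinset.filter (fun z => u k < z k) with hg
  set tset := insert (zr k - u k) (g.image fun z => z k - u k) with htset
  have htne : tset.Nonempty := ⟨_, Finset.mem_insert_self _ _⟩
  set t := tset.min' htne with ht
  have ht_pos : 0 < t := by
    rw [ht, Finset.lt_min'_iff]
    intro y hy
    rcases Finset.mem_insert.1 hy with rfl | hy
    · linarith
    · obtain ⟨z, hz, rfl⟩ := Finset.mem_image.1 hy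
      have : u k < z k := (Finset.mem_filter.1 hz).2
      linarith
  have ht_le : t ≤ zr k - u k := Finset.min'_le _ _ (Finset.mem_insert_self _ _)
  have ht_gap : ∀ z ∈ N, z k < u k + t → z k ≤ u k := by
    intro z hz hlt'
    by_contra hc
    push_neg at hc
    have hzg : z ∈ g := by simp [hg, hN.mem_toFinset, hz, hc]
    have : t ≤ z k - u k :=
      Finset.min'_le _ _ (Finset.mem_insert_of_mem (Finset.mem_image_of_mem _ hzg))
    linarith
  set y' : Fin (p+2) → ℝ := fun m => if m = j then zdef u k j else if m = k then u k + t else u m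
    with hy'
  have hy'j : y' j = zdef u k j := by simp [hy']
  have hy'k : y' k = u k + t := by simp [hy', hjk.symm]
  have hy'm : ∀ m, m ≠ j → m ≠ k → y' m = u m := by
    intro m h1 h2; simp [hy', h1, h2]
  have hy'P : y' ∈ P1Box zr N := by
    refine ⟨?_, ?_, ?_⟩
    · intro m
      show (0:ℝ) ≤ y' m
      by_cases h1 : m = j
      · subst h1; rw [hy'j]; exact (lt_trans (hxpos m) hgt).le
      · by_cases h2 : m = k
        · subst h2; rw [hy'k]
          have := huU.1 m
          simp only [Pi.zero_apply] at this
          linarith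
        · rw [hy'm m h1 h2]
          have := huU.1 m
          simpa using this
    · intro m
      by_cases h1 : m = j
      · subst h1; rw [hy'j]; exact ((hbox _ hzkN m).2).le
      · by_cases h2 : m = k
        · subst h2; rw [hy'k]; linarith
        · rw [hy'm m h1 h2]; exact huU.2.1 m
    · rintro ⟨z, hzN, hsd⟩
      have hz_not_u : ¬ SDom z u := fun hs => huU.2.2.1 ⟨z, hzN, hs⟩
      have hzk_ge : u k ≤ z k := by
        by_contra hc
        push_neg at hc
        apply hz_not_u
        intro m
        by_cases h1 : m = j
        · subst h1
          have h3 := hsd m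
          rw [hy'j] at h3
          exact lt_trans h3 ((hdef u huU k).2.2 m hjk)
        · by_cases h2 : m = k
          · subst h2; exact hc
          · have h3 := hsd m
            rwa [hy'm m h1 h2] at h3
      have hzk_lt : z k < u k + t := by
        have h3 := hsd k
        rwa [hy'k] at h3
      have hzk_eq : z k = u k := le_antisymm (ht_gap z hzN hzk_lt) hzk_ge
      have hzeq : z = zdef u k := by
        by_contra hne'
        exact hgp z hzN (zdef u k) hzkN hne' k (hzk_eq.trans hukeq)
      have h3 := hsd j
      rw [hy'j, hzeq] at h3
      exact lt_irrefl _ h3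
  obtain ⟨u', hu'U, hy'u'⟩ := exists_ub_ge hN hy'P
  have hu'T : u' ∈ Tf := by
    refine (hmemTf u').2 ⟨hu'U, fun m hm0 => ?_⟩
    by_cases h1 : m = j
    · subst h1
      have h3 := hy'u' m
      rw [hy'j] at h3
      exact lt_of_lt_of_le hgt h3
    · by_cases h2 : m = k
      · subst h2
        have h3 := hy'u' m
        rw [hy'k] at h3
        have h4 : x m < u m := huT' m hm0
        linarith
      · have h3 := hy'u' m
        rw [hy'm m h1 h2] at h3
        exact lt_of_lt_of_le (huT' m hm0) h3
  apply humax u' hu'T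
  refine lexLt_of_forall_le hkj (fun m hmj => ?_) ?_
  · by_cases h2 : m = k
    · subst h2
      have h3 := hy'u' m
      rw [hy'k] at h3
      linarith
    · have h3 := hy'u' m
      rwa [hy'm m hmj h2] at h3
  · have h3 := hy'u' k
    rw [hy'k] at h3
    linarith

end Core2
section Measure

open MeasureTheory

variable {p : ℕ} {zr : Fin (p+2) → ℝ} {N : Set (Fin (p+2) → ℝ)}
  {zdef : (Fin (p+2) → ℝ) → Fin (p+2) → (Fin (p+2) → ℝ)}

/-- Bad coordinate values in coordinate `j`. -/
def badVals (zr : Fin (p+2) → ℝ) (N : Set (Fin (p+2) → ℝ)) (j : Fin (p+2)) : Set ℝ :=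
  ((fun z : Fin (p+2) → ℝ => z j) '' Nhat zr N) ∪ ((fun v : Fin (p+2) → ℝ => v j) '' UBSet zr N)

/-- The null set of non-generic points. -/
def badSet (zr : Fin (p+2) → ℝ) (N : Set (Fin (p+2) → ℝ)) : Set (Fin (p+2) → ℝ) :=
  ⋃ j, ⋃ c ∈ badVals zr N j, {x | x j = c}

theorem hyperplane_null (j : Fin (p+2)) (c : ℝ) :
    volume {x : Fin (p+2) → ℝ | x j = c} = 0 := by
  rw [MeasureTheory.volume_pi]
  exact MeasureTheory.Measure.pi_hyperplane (fun _ => (volume : MeasureTheory.Measure ℝ)) j c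

theorem badSet_null (hN : N.Finite)
    (hdef : ∀ u ∈ UBSet zr N, ∀ j, zdef u j ∈ Nhat zr N ∧ zdef u j j = u j ∧
      ∀ k, k ≠ j → zdef u j k < u k) :
    volume (badSet zr N) = 0 := by
  have hNhat : (Nhat zr N).Finite := hN.union (Set.finite_range _)
  have hU : (UBSet zr N).Finite := ubset_finite hN hdef
  refine measure_iUnion_null fun j => ?_
  have hbv : (badVals zr N j).Countable :=
    ((hNhat.image _).union (hU.image _)).countable
  rw [measure_biUnion_null_iff hbv]
  exact fun c _ => hyperplane_null j c

theorem not_mem_badSet {x : Fin (p+2) → ℝ} (hx : x ∉ badSet zr N) :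
    (∀ z ∈ Nhat zr N, ∀ j, x j ≠ z j) ∧ (∀ u ∈ UBSet zr N, ∀ j, x j ≠ u j) := by
  constructor
  · intro z hz j he
    exact hx (Set.mem_iUnion.2 ⟨j, Set.mem_biUnion (Or.inl ⟨z, hz, rfl⟩) he⟩)
  · intro u hu j he
    exact hx (Set.mem_iUnion.2 ⟨j, Set.mem_biUnion (Or.inr ⟨u, hu, rfl⟩) he⟩)

/-- Lower corner of the box associated to `u`. -/
def loB (zdef : (Fin (p+2) → ℝ) → Fin (p+2) → (Fin (p+2) → ℝ)) (u : Fin (p+2) → ℝ) :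
    Fin (p+2) → ℝ :=
  fun j => (insert (0 : Fin (p+2)) (Finset.Iio j)).sup' (Finset.insert_nonempty _ _)
    (fun k => zdef u k j)

/-- Upper corner of the box associated to `u`. -/
def hiB (zr : Fin (p+2) → ℝ) (u : Fin (p+2) → ℝ) : Fin (p+2) → ℝ :=
  fun j => if j = 0 then zr 0 else u j

theorem loB_zero (u : Fin (p+2) → ℝ) : loB zdef u 0 = zdef u 0 0 := by
  have h : Finset.Iio (0 : Fin (p+2)) = ∅ := by
    ext k; simp [Finset.mem_Iio, Fin.not_lt_zero]
  rw [loB]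
  simp only [h, insert_empty_eq]
  simp

theorem loB_ne_zero (u : Fin (p+2) → ℝ) {j : Fin (p+2)} (hj : j ≠ 0) :
    loB zdef u j = (Finset.Iio j).sup'
      ⟨0, Finset.mem_Iio.mpr (Fin.pos_of_ne_zero hj)⟩ (fun k => zdef u k j) := by
  have hs : insert (0 : Fin (p+2)) (Finset.Iio j) = Finset.Iio j :=
    Finset.insert_eq_self.2 (Finset.mem_Iio.mpr (Fin.pos_of_ne_zero hj))
  exact Finset.sup'_congr _ hs (fun _ _ => rfl)

theorem mem_loB_le {u : Fin (p+2) → ℝ} {j k : Fin (p+2)} (hk : k ∈ insert (0:Fin (p+2)) (Finset.Iio j)) :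
    zdef u k j ≤ loB zdef u j := by
  unfold loB
  exact Finset.le_sup' (fun k => zdef u k j) hk

/-- The box `B(u)`. -/
def BoxU (zr : Fin (p+2) → ℝ) (zdef : (Fin (p+2) → ℝ) → Fin (p+2) → (Fin (p+2) → ℝ))
    (u : Fin (p+2) → ℝ) : Set (Fin (p+2) → ℝ) :=
  Set.Icc (loB zdef u) (hiB zr u)

theorem mem_box_phi
    (hdef : ∀ u ∈ UBSet zr N, ∀ j, zdef u j ∈ Nhat zr N ∧ zdef u j j = u j ∧
      ∀ k, k ≠ j → zdef u j k < u k)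
    {u x : Fin (p+2) → ℝ} (hu : u ∈ UBSet zr N) (hx : x ∈ BoxU zr zdef u)
    (hgen1 : ∀ z ∈ Nhat zr N, ∀ j, x j ≠ z j)
    (hgen2 : ∀ u' ∈ UBSet zr N, ∀ j, x j ≠ u' j) :
    PhiCond zdef x u ∧ x ∈ DomRegion zr N := by
  obtain ⟨hlo, hhi⟩ := hx
  have hlo' : ∀ j, loB zdef u j ≤ x j := fun j => hlo j
  have hhi' : ∀ j, x j ≤ hiB zr u j := fun j => hhi j
  have h00 : u 0 < x 0 := by
    have h1 : zdef u 0 0 ≤ x 0 := by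
      rw [← loB_zero (zdef := zdef) u]
      exact hlo' 0
    rw [(hdef u hu 0).2.1] at h1
    exact lt_of_le_of_ne h1 (Ne.symm (hgen2 u hu 0))
  have hxu : ∀ j, j ≠ 0 → x j < u j := by
    intro j hj
    have h1 : x j ≤ u j := by
      have := hhi' j
      rwa [hiB, if_neg hj] at this
    exact lt_of_le_of_ne h1 (hgen2 u hu j)
  have hxk : ∀ j, j ≠ 0 → ∀ k, k < j → zdef u k j < x j := by
    intro j hj k hk
    have h1 : zdef u k j ≤ x j :=
      le_trans (mem_loB_le (Finset.mem_insert_of_mem (Finset.mem_Iio.2 hk))) (hlo' j)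
    exact lt_of_le_of_ne h1 (Ne.symm (hgen1 (zdef u k) (hdef u hu k).1 j))
  have hphi : PhiCond zdef x u := ⟨h00, hxu, hxk⟩
  refine ⟨hphi, ?_⟩
  have hx0zr : x 0 ≤ zr 0 := by
    have := hhi' 0
    rwa [hiB, if_pos rfl] at this
  have hz0N : zdef u 0 ∈ N :=
    zdef_mem_N_of_lt hdef hu (lt_of_lt_of_le h00 hx0zr)
  refine ⟨zdef u 0, hz0N, fun j => ?_, fun j => ?_⟩
  · by_cases hj : j = 0
    · subst hj
      rw [(hdef u hu 0).2.1]
      exact h00.le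
    · exact (hxk j hj 0 (Fin.pos_of_ne_zero hj)).le
  · by_cases hj : j = 0
    · subst hj; exact hx0zr
    · exact le_trans (hxu j hj).le (hu.2.1 j)

theorem phi_mem_box {u x : Fin (p+2) → ℝ} (heq0 : zdef u 0 0 = u 0)
    (hxzr : WDom x zr) (hphi : PhiCond zdef x u) : x ∈ BoxU zr zdef u := by
  obtain ⟨h00, hxu, hxk⟩ := hphi
  constructor
  · intro j
    show loB zdef u j ≤ x j
    by_cases hj : j = 0
    · subst hj
      rw [loB_zero (zdef := zdef) u, heq0]
      exact h00.le
    · rw [loB_ne_zero u hj]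
      refine Finset.sup'_le _ _ fun k hk => (hxk j hj k (Finset.mem_Iio.1 hk)).le
  · intro j
    show x j ≤ hiB zr u j
    by_cases hj : j = 0
    · subst hj; rw [hiB, if_pos rfl]; exact hxzr 0
    · rw [hiB, if_neg hj]; exact (hxu j hj).le

end Measure
/-- U(N) is finite, and the Lebesgue measure of the dominated region D(N)
equals the sum, over u ∈ U(N), of
(zr_1 − z^1(u)_1) · ∏_{j=2}^p (u_j − max_{k<j} z^k(u)_j). -/
theorem volume_dominated_region_eq_sum_boxes
    (p : ℕ) (zr : Fin (p+2) → ℝ) (hzr : ∀ j, 0 < zr j)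
    (N : Set (Fin (p+2) → ℝ)) (hN : N.Finite) (hbox : ∀ z ∈ N, InOpenBox zr z)
    (hstab : Stable N) (hgp : GenPos N)
    (zdef : (Fin (p+2) → ℝ) → Fin (p+2) → (Fin (p+2) → ℝ))
    (hdef : ∀ u ∈ UBSet zr N, ∀ j, zdef u j ∈ Nhat zr N ∧ zdef u j j = u j ∧
            ∀ k, k ≠ j → zdef u j k < u k) :
    ∃ hU : (UBSet zr N).Finite,
      MeasureTheory.volume (DomRegion zr N) =
        ∑ u ∈ hU.toFinset, ENNReal.ofReal
          ((zr 0 - zdef u 0 0) *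
            ∏ j ∈ (Finset.univ.erase (0 : Fin (p+2))).attach,
              (u j.1 - (Finset.Iio j.1).sup'
                ⟨0, Finset.mem_Iio.mpr (Fin.pos_of_ne_zero (Finset.ne_of_mem_erase j.2))⟩
                (fun k => zdef u k j.1))) := by
  classical
  have hU : (UBSet zr N).Finite := ubset_finite hN hdef
  refine ⟨hU, ?_⟩
  have hmemF : ∀ u, u ∈ hU.toFinset ↔ u ∈ UBSet zr N := fun u => Set.Finite.mem_toFinset _
  have hnull := badSet_null (zdef := zdef) hN hdef
  have hae : MeasureTheory.volume (DomRegion zr N) =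
      MeasureTheory.volume (⋃ u ∈ hU.toFinset, BoxU zr zdef u) := by
    apply MeasureTheory.measure_congr
    rw [MeasureTheory.ae_eq_set]
    constructor
    · refine MeasureTheory.measure_mono_null ?_ hnull
      rintro x ⟨hxD, hxU⟩
      by_contra hxB
      obtain ⟨hgen1, hgen2⟩ := not_mem_badSet hxB
      obtain ⟨u, huU, hphi⟩ := phi_exists hzr hN hbox hgp hdef hxD hgen1 hgen2
      obtain ⟨z0, hz0, hzx, hxzr⟩ := hxD
      exact hxU (Set.mem_biUnion ((hmemF u).2 huU)
        (phi_mem_box (hdef u huU 0).2.1 hxzr hphi))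
    · refine MeasureTheory.measure_mono_null ?_ hnull
      rintro x ⟨hxU, hxD⟩
      by_contra hxB
      obtain ⟨hgen1, hgen2⟩ := not_mem_badSet hxB
      obtain ⟨u, huF, hxu⟩ := Set.mem_iUnion₂.1 hxU
      exact hxD (mem_box_phi hdef ((hmemF u).1 huF) hxu hgen1 hgen2).2
  rw [hae, MeasureTheory.measure_biUnion_finset₀ ?hd ?hm]
  case hm => exact fun u _ => measurableSet_Icc.nullMeasurableSet
  case hd =>
    intro u huF u' hu'F hne
    refine MeasureTheory.measure_mono_null ?_ hnull
    rintro x ⟨hx1, hx2⟩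
    by_contra hxB
    obtain ⟨hgen1, hgen2⟩ := not_mem_badSet hxB
    have h1 := mem_box_phi hdef ((hmemF u).1 huF) hx1 hgen1 hgen2
    have h2 := mem_box_phi hdef ((hmemF u').1 hu'F) hx2 hgen1 hgen2
    exact hne (phi_unique hgp hdef ((hmemF u).1 huF) ((hmemF u').1 hu'F) h1.1 h2.1)
  refine Finset.sum_congr rfl fun u huF => ?_
  have huU := (hmemF u).1 huF
  have h0 : hiB zr u 0 - loB zdef u 0 = zr 0 - zdef u 0 0 := by
    rw [loB_zero (zdef := zdef)]; simp [hiB]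
  have hnn : ∀ j ∈ Finset.univ.erase (0 : Fin (p+2)), 0 ≤ hiB zr u j - loB zdef u j := by
    intro j hj
    have hj0 := Finset.ne_of_mem_erase hj
    rw [hiB, if_neg hj0, loB_ne_zero (zdef := zdef) u hj0, sub_nonneg]
    refine Finset.sup'_le _ _ fun k hk => ?_
    exact ((hdef u huU k).2.2 j (ne_of_gt (Finset.mem_Iio.1 hk))).le
  have hnn0 : (0:ℝ) ≤ zr 0 - zdef u 0 0 := by
    rw [(hdef u huU 0).2.1, sub_nonneg]
    exact huU.2.1 0
  have hmatch : ∏ j ∈ (Finset.univ.erase (0 : Fin (p+2))).attach,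
      (u j.1 - (Finset.Iio j.1).sup'
        ⟨0, Finset.mem_Iio.mpr (Fin.pos_of_ne_zero (Finset.ne_of_mem_erase j.2))⟩
        (fun k => zdef u k j.1)) =
      ∏ j ∈ Finset.univ.erase (0 : Fin (p+2)), (hiB zr u j - loB zdef u j) := by
    rw [← Finset.prod_attach (Finset.univ.erase (0 : Fin (p+2)))
      (fun j => hiB zr u j - loB zdef u j)]
    refine Finset.prod_congr rfl fun j _ => ?_
    have hj0 : j.1 ≠ 0 := Finset.ne_of_mem_erase j.2
    rw [hiB, if_neg hj0, loB_ne_zero (zdef := zdef) u hj0]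
  calc MeasureTheory.volume (BoxU zr zdef u)
      = ∏ j, ENNReal.ofReal (hiB zr u j - loB zdef u j) := Real.volume_Icc_pi
    _ = ENNReal.ofReal (hiB zr u 0 - loB zdef u 0) *
        ∏ j ∈ Finset.univ.erase (0 : Fin (p+2)),
          ENNReal.ofReal (hiB zr u j - loB zdef u j) :=
        (Finset.mul_prod_erase Finset.univ _ (Finset.mem_univ 0)).symm
    _ = ENNReal.ofReal ((zr 0 - zdef u 0 0) *
        ∏ j ∈ Finset.univ.erase (0 : Fin (p+2)), (hiB zr u j - loB zdef u j)) := by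
        rw [ENNReal.ofReal_mul hnn0, h0, ENNReal.ofReal_prod_of_nonneg hnn]
    _ = _ := by rw [hmatch]
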